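/- Let 0 < p < 2 and let 0 ≤ t ≤ u be real numbers with u > 0. Then u^{p−2}(u² − t²) ≤ (2/p)(u^p − t^p). -/

import Mathlib

/-- For `0 < p < 2` and `0 ≤ t ≤ u` with `u > 0`:
`u^{p−2}(u² − t²) ≤ (2/p)(u^p − t^p)`. -/
theorem rpow_sub_two_mul_sq_sub_le {p t u : ℝ} (hp0 : 0 < p) (hp2 : p < 2)
    (ht : 0 ≤ t) (htu : t ≤ u) (hu : 0 < u) :
    u ^ (p - 2) * (u ^ 2 - t ^ 2) ≤ (2 / p) * (u ^ p - t ^ p) := by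
  set x := t / u with hxdef
  have hx0 : 0 ≤ x := div_nonneg ht hu.le
  have hx1 : x ≤ 1 := (div_le_one hu).mpr htu
  -- Bernoulli: (1 + s)^(p/2) ≤ 1 + (p/2) * s with s = x^2 - 1
  have hs : (-1 : ℝ) ≤ x ^ 2 - 1 := by nlinarith
  have hb := rpow_one_add_le_one_add_mul_self hs (by positivity : (0:ℝ) ≤ p / 2)
      (by linarith : p / 2 ≤ 1)
  have hx2 : (1 : ℝ) + (x ^ 2 - 1) = x ^ 2 := by ring
  rw [hx2] at hb
  have hxp : (x ^ 2 : ℝ) ^ (p / 2) = x ^ p := by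
    rw [← Real.rpow_natCast x 2, ← Real.rpow_mul hx0]
    congr 1
    push_cast
    ring
  rw [hxp] at hb
  -- key scalar inequality : 1 - x^2 ≤ (2/p) * (1 - x^p)
  have hkey : 1 - x ^ 2 ≤ (2 / p) * (1 - x ^ p) := by
    rw [div_mul_eq_mul_div, le_div_iff₀ hp0]
    nlinarith
  -- rewrite both sides using u^p
  have ht' : t = u * x := by rw [hxdef, mul_div_assoc', mul_div_cancel_left₀ _ hu.ne']
  have hup : (0 : ℝ) < u ^ p := Real.rpow_pos_of_pos hu p
  have hL : u ^ (p - 2) * (u ^ 2 - t ^ 2) = u ^ p * (1 - x ^ 2) := by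
    have h1 : u ^ (p - 2) * u ^ (2 : ℕ) = u ^ p := by
      rw [show (u:ℝ) ^ (2:ℕ) = u ^ ((2:ℕ):ℝ) from (Real.rpow_natCast u 2).symm,
        ← Real.rpow_add hu]
      norm_num
    rw [ht', ← h1]
    ring
  have hR : u ^ p - t ^ p = u ^ p * (1 - x ^ p) := by
    rw [ht', Real.mul_rpow hu.le hx0]; ring
  rw [hL, hR]
  calc u ^ p * (1 - x ^ 2) ≤ u ^ p * ((2 / p) * (1 - x ^ p)) :=
        mul_le_mul_of_nonneg_left hkey hup.le
    _ = 2 / p * (u ^ p * (1 - x ^ p)) := by ring
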